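/- For a deck of 2^k cards and positions i, j, let i XOR j have binary digits x_{k-1}...x_0. Define shuffles S_0,...,S_{k-1} by: if k is odd, S_r = L when x_r = 0 and S_r = R when x_r = 1; if k is even, S_r = R when x_r = 0 and S_r = L when x_r = 1. Then the composite S_{k-1}∘...∘S_1∘S_0 swaps the cards in positions i and j (and in particular maps i to j and j to i). -/

import Mathlib

private lemma elmL0 (A q : ℕ) (h : q + 1 ≤ A) :
    (A*(2*q) + (A-1)) % (2*A+1) = A - (q+1) := by
  have key : A*(2*q) + (A-1) = (A - (q+1)) + (2*A+1)*q := by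
    zify [show 1 ≤ A by omega, h]; ring
  rw [key, Nat.add_mul_mod_self_left, Nat.mod_eq_of_lt (by omega)]

private lemma elmL1 (A q : ℕ) (h : q + 1 ≤ A) :
    (A*(2*q+1) + (A-1)) % (2*A+1) = 2*A - (q+1) := by
  have key : A*(2*q+1) + (A-1) = (2*A - (q+1)) + (2*A+1)*q := by
    zify [show 1 ≤ A by omega, show q+1 ≤ 2*A by omega]; ring
  rw [key, Nat.add_mul_mod_self_left, Nat.mod_eq_of_lt (by omega)]

private lemma elmR0 (A q : ℕ) (h1 : 1 ≤ q) (h2 : q + 1 ≤ A) :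
    ((A-1)*(2*q)) % (2*A-1) = 2*A - (q+1) := by
  have key : (A-1)*(2*q) = (2*A - (q+1)) + (2*A-1)*(q-1) := by
    zify [show 1 ≤ A by omega, show q+1 ≤ 2*A by omega, h1, show 1 ≤ 2*A by omega]
    ring
  rw [key, Nat.add_mul_mod_self_left, Nat.mod_eq_of_lt (by omega)]

private lemma elmR1 (A q : ℕ) (h : q + 1 ≤ A) :
    ((A-1)*(2*q+1)) % (2*A-1) = A - (q+1) := by
  have key : (A-1)*(2*q+1) = (A - (q+1)) + (2*A-1)*q := by
    zify [show 1 ≤ A by omega, h, show 1 ≤ 2*A by omega]; ring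
  rw [key, Nat.add_mul_mod_self_left, Nat.mod_eq_of_lt (by omega)]

/-- Elmsley's problem with unshuffles on `2^k` cards: let `x = i XOR j` have
binary digits `x_{k-1} … x_0` and define `S_r = L` or `R` according to the
digit `x_r` and the parity of `k`.  Then the composite
`S_{k-1} ∘ ⋯ ∘ S_1 ∘ S_0` swaps the cards in positions `i` and `j`. -/
theorem elmsley_unshuffles (k : ℕ) (hk : 1 ≤ k)
    (L R : Equiv.Perm (Fin (2 ^ k)))
    (hL : ∀ i : Fin (2 ^ k), (L i : ℕ) =
      (2 ^ (k - 1) * (i : ℕ) + (2 ^ (k - 1) - 1)) % (2 ^ k + 1))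
    (hR : ∀ i : Fin (2 ^ k), (R i : ℕ) =
      if (i : ℕ) = 0 then 2 ^ k - 1
      else ((2 ^ (k - 1) - 1) * (i : ℕ)) % (2 ^ k - 1))
    (i j : Fin (2 ^ k))
    (S : Fin k → Equiv.Perm (Fin (2 ^ k)))
    (hS : ∀ r : Fin k, S r =
      if Odd k then
        (if Nat.testBit ((i : ℕ) ^^^ (j : ℕ)) (r : ℕ) then R else L)
      else
        (if Nat.testBit ((i : ℕ) ^^^ (j : ℕ)) (r : ℕ) then L else R)) :
    ((List.ofFn S).reverse.prod) i = j ∧ ((List.ofFn S).reverse.prod) j = i := by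
  set x : ℕ := (i : ℕ) ^^^ (j : ℕ) with hx
  have hA : 2 ^ k = 2 * 2 ^ (k - 1) := by
    conv_lhs => rw [show k = (k-1)+1 by omega]
    rw [pow_succ]; ring
  have hApos : 1 ≤ 2 ^ (k - 1) := Nat.one_le_two_pow
  -- value of L
  have hLval : ∀ w : Fin (2 ^ k), (L w : ℕ) =
      if (w : ℕ) % 2 = 0 then 2 ^ (k-1) - ((w : ℕ)/2 + 1)
      else 2 ^ k - ((w : ℕ)/2 + 1) := by
    intro w
    have hw := w.isLt
    have hq : (w : ℕ)/2 < 2 ^ (k-1) := by omega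
    rw [hL w]
    rcases Nat.mod_two_eq_zero_or_one (w : ℕ) with h | h
    · rw [if_pos h]
      have key := elmL0 (2^(k-1)) ((w : ℕ)/2) (by omega)
      rw [show 2*((w : ℕ)/2) = (w : ℕ) by omega] at key
      rw [← hA] at key; exact key
    · rw [if_neg (by omega)]
      have key := elmL1 (2^(k-1)) ((w : ℕ)/2) (by omega)
      rw [show 2*((w : ℕ)/2)+1 = (w : ℕ) by omega] at key
      rw [← hA] at key; exact key
  -- value of R
  have hRval : ∀ w : Fin (2 ^ k), (R w : ℕ) =
      if (w : ℕ) = 0 then 2 ^ k - 1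
      else if (w : ℕ) % 2 = 0 then 2 ^ k - ((w : ℕ)/2 + 1)
      else 2 ^ (k-1) - ((w : ℕ)/2 + 1) := by
    intro w
    have hw := w.isLt
    have hq : (w : ℕ)/2 < 2 ^ (k-1) := by omega
    rw [hR w]
    by_cases h0 : (w : ℕ) = 0
    · rw [if_pos h0, if_pos h0]
    rw [if_neg h0, if_neg h0]
    rcases Nat.mod_two_eq_zero_or_one (w : ℕ) with h | h
    · rw [if_pos h]
      have key := elmR0 (2^(k-1)) ((w : ℕ)/2) (by omega) (by omega)
      rw [show 2*((w : ℕ)/2) = (w : ℕ) by omega] at key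
      rw [← hA] at key; exact key
    · rw [if_neg (by omega)]
      have key := elmR1 (2^(k-1)) ((w : ℕ)/2) (by omega)
      rw [show 2*((w : ℕ)/2)+1 = (w : ℕ) by omega] at key
      rw [← hA] at key; exact key
  -- bit description of L
  have hLbit : ∀ w : Fin (2 ^ k), ∀ t, t < k →
      Nat.testBit (L w : ℕ) t
        = ((Nat.testBit (w : ℕ) ((t+1) % k)).xor (decide (t < k-1))) := by
    intro w t ht
    have hw := w.isLt
    have hq : (w : ℕ)/2 < 2 ^ (k-1) := by omega
    rw [hLval w]
    by_cases htk : t < k - 1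
    · have hmod : (t+1) % k = t+1 := Nat.mod_eq_of_lt (by omega)
      rw [hmod, show Nat.testBit (w : ℕ) (t+1) = Nat.testBit ((w : ℕ)/2) t from
        (Nat.testBit_succ _ _)]
      rcases Nat.mod_two_eq_zero_or_one (w : ℕ) with h | h
      · rw [if_pos h, Nat.testBit_two_pow_sub_succ hq]
        simp [htk]
      · rw [if_neg (by omega), Nat.testBit_two_pow_sub_succ (by omega : (w:ℕ)/2 < 2 ^ k)]
        simp [htk, ht]
    · have ht1 : t = k - 1 := by omega
      have hmod : (t+1) % k = 0 := by
        rw [ht1, show k-1+1 = k by omega, Nat.mod_self]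
      rw [hmod]
      rcases Nat.mod_two_eq_zero_or_one (w : ℕ) with h | h
      · rw [if_pos h, Nat.testBit_two_pow_sub_succ hq]
        simp [htk, Nat.testBit_zero, h]
      · rw [if_neg (by omega), Nat.testBit_two_pow_sub_succ (by omega : (w:ℕ)/2 < 2 ^ k)]
        have hb : Nat.testBit ((w : ℕ)/2) t = false :=
          Nat.testBit_lt_two_pow (by rw [ht1]; exact hq)
        simp [htk, ht, hb, Nat.testBit_zero, h]
  -- bit description of R
  have hRbit : ∀ w : Fin (2 ^ k), ∀ t, t < k →
      Nat.testBit (R w : ℕ) t = !(Nat.testBit (w : ℕ) ((t+1) % k)) := by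
    intro w t ht
    have hw := w.isLt
    have hq : (w : ℕ)/2 < 2 ^ (k-1) := by omega
    rw [hRval w]
    by_cases h0 : (w : ℕ) = 0
    · rw [if_pos h0, h0]
      simp [ht]
    rw [if_neg h0]
    by_cases htk : t < k - 1
    · have hmod : (t+1) % k = t+1 := Nat.mod_eq_of_lt (by omega)
      rw [hmod, show Nat.testBit (w : ℕ) (t+1) = Nat.testBit ((w : ℕ)/2) t from
        (Nat.testBit_succ _ _)]
      rcases Nat.mod_two_eq_zero_or_one (w : ℕ) with h | h
      · rw [if_pos h, Nat.testBit_two_pow_sub_succ (by omega : (w:ℕ)/2 < 2 ^ k)]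
        simp [ht]
      · rw [if_neg (by omega), Nat.testBit_two_pow_sub_succ hq]
        simp [htk]
    · have ht1 : t = k - 1 := by omega
      have hmod : (t+1) % k = 0 := by
        rw [ht1, show k-1+1 = k by omega, Nat.mod_self]
      rw [hmod]
      have hb : Nat.testBit ((w : ℕ)/2) t = false :=
        Nat.testBit_lt_two_pow (by rw [ht1]; exact hq)
      rcases Nat.mod_two_eq_zero_or_one (w : ℕ) with h | h
      · rw [if_pos h, Nat.testBit_two_pow_sub_succ (by omega : (w:ℕ)/2 < 2 ^ k)]
        simp [ht, hb, Nat.testBit_zero, h]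
      · rw [if_neg (by omega), Nat.testBit_two_pow_sub_succ hq]
        simp [htk, Nat.testBit_zero, h]
  -- bit description of each shuffle S r
  have hSbit : ∀ r : Fin k, ∀ w : Fin (2 ^ k), ∀ t, t < k →
      Nat.testBit ((S r) w : ℕ) t
        = ((Nat.testBit (w : ℕ) ((t+1) % k)).xor
            (if (Nat.testBit x (r : ℕ)).xor (decide (Odd k)) then decide (t < k-1)
             else true)) := by
    intro r w t ht
    rw [hS r]
    by_cases hodd : Odd k <;> cases hb : Nat.testBit x (r : ℕ) <;>
      simp [hodd, hb, hLbit w t ht, hRbit w t ht, Bool.xor_comm]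
  -- partial products
  set P : ℕ → Equiv.Perm (Fin (2 ^ k)) := fun m => ((List.ofFn S).take m).reverse.prod
    with hPdef
  have hP0 : P 0 = 1 := by simp [hPdef]
  have hPsucc : ∀ m (hm : m < k), P (m+1) = S ⟨m, hm⟩ * P m := by
    intro m hm
    show ((List.ofFn S).take (m+1)).reverse.prod = _
    rw [List.take_succ, List.getElem?_eq_getElem (by simpa using hm)]
    simp [List.prod_append]
    rfl
  -- the main invariant
  have main : ∀ m, m ≤ k → ∀ v : Fin (2 ^ k), ∀ t, t < k →
      Nat.testBit ((P m) v : ℕ) t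
        = (Nat.testBit (v : ℕ) ((t+m) % k)).xor
            ((decide (Odd m)).xor
              (if (t+m) % k < m then (Nat.testBit x ((t+m) % k)).xor (decide (Odd k))
               else false)) := by
    intro m
    induction m with
    | zero =>
      intro _ v t ht
      rw [hP0]
      simp [Nat.mod_eq_of_lt ht]
    | succ m ih =>
      intro hm1 v t ht
      have hm : m < k := by omega
      rw [hPsucc m hm, Equiv.Perm.mul_apply, hSbit ⟨m, hm⟩ ((P m) v) t ht,
        ih (by omega) v ((t+1) % k) (Nat.mod_lt _ (by omega))]
      have hodd : decide (Odd (m+1)) = !decide (Odd m) := by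
        rw [← decide_not, decide_eq_decide]
        exact Nat.odd_add_one
      by_cases htk : t = k - 1
      · have h1 : (t+1) % k = 0 := by
          rw [htk, show k-1+1 = k by omega, Nat.mod_self]
        have h2 : (t+(m+1)) % k = m := by
          rw [show t+(m+1) = k + m by omega, Nat.add_mod_left,
            Nat.mod_eq_of_lt hm]
        rw [h1, h2]
        rw [show (0+m) % k = m by rw [Nat.zero_add, Nat.mod_eq_of_lt hm]]
        rw [if_neg (lt_irrefl m), if_pos (Nat.lt_succ_self m), hodd,
          decide_eq_false (by omega : ¬ t < k - 1)]
        cases Nat.testBit (v : ℕ) m <;> cases decide (Odd m) <;>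
          cases hxb : (Nat.testBit x m).xor (decide (Odd k)) <;> simp [hxb]
      · have ht1 : t + 1 < k := by omega
        have h1 : (t+1) % k = t + 1 := Nat.mod_eq_of_lt ht1
        rw [h1, show (t+1+m) % k = (t+(m+1)) % k by rw [show t+1+m = t+(m+1) by omega]]
        have hs0 : (t+(m+1)) % k ≠ m := by
          intro hcon
          rcases Nat.lt_or_ge (t+(m+1)) k with hlt | hge
          · rw [Nat.mod_eq_of_lt hlt] at hcon; omega
          · rw [Nat.mod_eq_sub_mod hge, Nat.mod_eq_of_lt (by omega)] at hcon; omega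
        have hcond : ((t+(m+1)) % k < m + 1) = ((t+(m+1)) % k < m) := by
          rw [eq_iff_iff]
          constructor
          · intro hc; omega
          · intro hc; omega
        simp only [hcond]
        rw [decide_eq_true (by omega : t < k - 1), hodd]
        cases Nat.testBit (v : ℕ) ((t+(m+1)) % k) <;> cases decide (Odd m) <;>
          cases hxb : (if (t+(m+1)) % k < m
            then (Nat.testBit x ((t+(m+1)) % k)).xor (decide (Odd k)) else false) <;>
          simp [hxb]
  -- conclusion
  have hfull : P k = (List.ofFn S).reverse.prod := by
    show ((List.ofFn S).take k).reverse.prod = _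
    rw [List.take_of_length_le (by simp)]
  have key : ∀ v u : Fin (2 ^ k), (v : ℕ) ^^^ x = (u : ℕ) →
      ((List.ofFn S).reverse.prod) v = u := by
    intro v u hvu
    rw [← hfull]
    apply Fin.ext
    apply Nat.eq_of_testBit_eq
    intro t
    by_cases ht : t < k
    · rw [main k le_rfl v t ht]
      have h1 : (t+k) % k = t := by rw [Nat.add_mod_right, Nat.mod_eq_of_lt ht]
      rw [h1, if_pos ht]
      have h2 : (decide (Odd k)).xor ((Nat.testBit x t).xor (decide (Odd k)))
          = Nat.testBit x t := by
        cases Nat.testBit x t <;> cases decide (Odd k) <;> simp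
      rw [h2, ← Nat.testBit_xor, hvu]
    · have hge : 2 ^ k ≤ 2 ^ t := Nat.pow_le_pow_right (by norm_num) (by omega)
      rw [Nat.testBit_lt_two_pow (lt_of_lt_of_le (Fin.isLt _) hge),
        Nat.testBit_lt_two_pow (lt_of_lt_of_le (Fin.isLt _) hge)]
  constructor
  · exact key i j (by rw [hx, ← Nat.xor_assoc, Nat.xor_self, Nat.zero_xor])
  · exact key j i (by rw [hx, Nat.xor_comm (i : ℕ) (j : ℕ), ← Nat.xor_assoc,
      Nat.xor_self, Nat.zero_xor])
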